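/- Let π(u,v) = (u = x_0, …, x_ℓ = v) be a shortest u–v path in G ∪ G^(k) with the minimum number of edges, where all edges have finite weight. Then for every index i with 0 ≤ i ≤ ℓ/4 − 1 and every vertex y with y ∈ S[k](x_{4i}), we have d_G(x_{4i}, y) ≤ d_G(x_{4i}, x_{4i+2}); moreover x_{4i+2} ∉ S[k](x_{4i}). -/

import Mathlib

open scoped ENNReal

namespace Stmt2

variable {V : Type*}

/-- Endpoint of a walk starting at `u` with subsequent vertices given by the list. -/
def last : V → List V → V
  | u, [] => u
  | _, x :: xs => last x xs

/-- Weight of a walk starting at `u` with subsequent vertices given by the list. -/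
noncomputable def cost (w : V → V → ℝ≥0∞) : V → List V → ℝ≥0∞
  | _, [] => 0
  | u, x :: xs => w u x + cost w x xs

/-- `h`-hop-limited distance from `u` to `v` (non-edges have weight `⊤`). -/
noncomputable def hdist (w : V → V → ℝ≥0∞) (h : ℕ) (u v : V) : ℝ≥0∞ :=
  ⨅ p ∈ {p : List V | p.length ≤ h ∧ last u p = v}, cost w u p

/-- Shortest-path distance from `u` to `v`. -/
noncomputable def dist (w : V → V → ℝ≥0∞) (u v : V) : ℝ≥0∞ :=
  ⨅ h : ℕ, hdist w h u v

/-- `S` is a set of (at most) `k` closest reachable vertices to `v` (excluding `v`),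
with ties broken arbitrarily: members of `S` are reachable and distinct from `v`,
`|S| ≤ k`, every member is at least as close as every reachable non-member, and `S`
has exactly `k` elements unless it already contains all reachable vertices. -/
def IsKClosest [Fintype V] (w : V → V → ℝ≥0∞) (k : ℕ) (v : V) (S : Finset V) : Prop :=
  (∀ u ∈ S, u ≠ v ∧ dist w v u < ⊤) ∧ S.card ≤ k ∧
  (∀ y ∈ S, ∀ z, z ∉ S → z ≠ v → dist w v z < ⊤ → dist w v y ≤ dist w v z) ∧
  (∀ z, z ∉ S → z ≠ v → dist w v z < ⊤ → S.card = k)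

/-- Weight function of the union `G ∪ G^(k)` of the graph with the `k`-shortcut hopset:
hopset edges `(u,v)` (present when `u ∈ S v` or `v ∈ S u`) get weight `d_G(u,v)`. -/
noncomputable def unionW [Fintype V] [DecidableEq V] (w : V → V → ℝ≥0∞) (S : V → Finset V)
    (u v : V) : ℝ≥0∞ :=
  if u ∈ S v ∨ v ∈ S u then min (w u v) (dist w u v) else w u v


lemma last_cons (x : V) (xs : List V) (u : V) : last u (x :: xs) = last x xs := rfl

lemma last_append (u : V) (p q : List V) : last u (p ++ q) = last (last u p) q := by
  induction p generalizing u with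
  | nil => rfl
  | cons x xs ih => simpa [last] using ih x

lemma cost_append (w : V → V → ℝ≥0∞) (u : V) (p q : List V) :
    cost w u (p ++ q) = cost w u p + cost w (last u p) q := by
  induction p generalizing u with
  | nil => simp [cost, last]
  | cons x xs ih => simp [cost, last, ih, add_assoc]

lemma dist_le_cost (w : V → V → ℝ≥0∞) (u v : V) (p : List V) (h : last u p = v) :
    dist w u v ≤ cost w u p := by
  refine iInf_le_of_le p.length ?_
  exact iInf₂_le p ⟨le_rfl, h⟩

lemma dist_le_w (w : V → V → ℝ≥0∞) (u v : V) : dist w u v ≤ w u v := by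
  have := dist_le_cost w u v [v] rfl
  simpa [cost] using this

lemma dist_triangle (w : V → V → ℝ≥0∞) (a b c : V) :
    dist w a c ≤ dist w a b + dist w b c := by
  have key : ∀ p q : List V, last a p = b → last b q = c →
      dist w a c ≤ cost w a p + cost w b q := by
    intro p q hp hq
    have h := dist_le_cost w a c (p ++ q) (by rw [last_append, hp, hq])
    rwa [cost_append, hp] at h
  simp only [dist]
  rw [ENNReal.iInf_add]
  refine le_iInf fun h₁ => ?_
  rw [ENNReal.add_iInf]
  refine le_iInf fun h₂ => ?_
  simp only [hdist]
  rw [ENNReal.iInf_add]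
  refine le_iInf fun p => ?_
  rw [ENNReal.iInf_add]
  refine le_iInf fun hp => ?_
  rw [ENNReal.add_iInf]
  refine le_iInf fun q => ?_
  rw [ENNReal.add_iInf]
  refine le_iInf fun hq => ?_
  simpa [dist, hdist] using key p q hp.2 hq.2

lemma dist_le_unionW [Fintype V] [DecidableEq V] (w : V → V → ℝ≥0∞) (S : V → Finset V)
    (u v : V) : dist w u v ≤ unionW w S u v := by
  unfold unionW
  split
  · exact le_min (dist_le_w w u v) le_rfl
  · exact dist_le_w w u v

lemma last_take : ∀ (n : ℕ) (p : List V) (u : V), n ≤ p.length →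
    last u (p.take n) = (u :: p).getD n u
  | 0, p, u, _ => rfl
  | n+1, [], u, h => by simp at h
  | n+1, x :: xs, u, h => by
    have hn : n ≤ xs.length := by simpa using h
    simp only [List.take_succ_cons, last, List.getD_cons_succ]
    rw [last_take n xs x hn]
    rcases lt_or_eq_of_le hn with hlt | heq
    · rw [List.getD_eq_getElem _ _ (by simpa using Nat.lt_succ_of_lt hlt),
        List.getD_eq_getElem _ _ (by simpa using Nat.lt_succ_of_lt hlt)]
    · rw [List.getD_eq_getElem _ _ (by simp [heq]), List.getD_eq_getElem _ _ (by simp [heq])]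

/-- Along a minimum-weight path in `G ∪ G^(k)` with the fewest edges, every member of
`S[k](x_{4i})` is at distance (in `G`) at most `d_G(x_{4i}, x_{4i+2})` from `x_{4i}`;
moreover `x_{4i+2} ∉ S[k](x_{4i})`. -/
theorem kclosest_within_two_hops [Fintype V] [DecidableEq V]
    (w : V → V → ℝ≥0∞) (hsymm : ∀ u v, w u v = w v u)
    (k : ℕ) (hk : 1 ≤ k)
    (S : V → Finset V) (hS : ∀ v, IsKClosest w k v (S v))
    (u v : V) (p : List V)
    (hlast : last u p = v)
    (hfin : cost (unionW w S) u p < ⊤)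
    (hmincost : cost (unionW w S) u p = dist (unionW w S) u v)
    (hminhops : ∀ q : List V, last u q = v →
      cost (unionW w S) u q = cost (unionW w S) u p → p.length ≤ q.length)
    (i : ℕ) (hi : 4 * i + 4 ≤ p.length) :
    (∀ y ∈ S ((u :: p).getD (4 * i) u),
      dist w ((u :: p).getD (4 * i) u) y ≤
        dist w ((u :: p).getD (4 * i) u) ((u :: p).getD (4 * i + 2) u)) ∧
    ((u :: p).getD (4 * i + 2) u) ∉ S ((u :: p).getD (4 * i) u) := by
  classical
  set n := 4 * i with hn
  have hn0 : n < p.length := by omega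
  have hn1 : n + 1 < p.length := by omega
  set W := unionW w S with hW
  set tk := p.take n with htk
  set dr := p.drop (n + 2) with hdr
  set b := p[n]'hn0 with hbdef
  set c := p[n+1]'hn1 with hcdef
  set a := (u :: p).getD n u with hadef
  have halast : last u tk = a := last_take n p u (le_of_lt hn0)
  have hsplit : p = tk ++ b :: c :: dr := by
    conv_lhs => rw [← List.take_append_drop n p]
    rw [List.drop_eq_getElem_cons hn0, List.drop_eq_getElem_cons (by simpa using hn1)]
  have hcgetD : (u :: p).getD (n + 2) u = c := by
    rw [List.getD_cons_succ, List.getD_eq_getElem _ _ hn1]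
  have hcostp : cost W u p = cost W u tk + (W a b + (W b c + cost W c dr)) := by
    rw [hsplit, cost_append, halast]; rfl
  have hlastp : last c dr = v := by
    have := hlast
    rw [hsplit, last_append, halast, last_cons, last_cons] at this
    exact this
  -- generic replacement argument
  have repl : ∀ rest' : List V, last a rest' = v →
      cost W a rest' ≤ W a b + (W b c + cost W c dr) →
      rest'.length < 2 + dr.length → False := by
    intro rest' hl hcle hlen
    set q := tk ++ rest' with hq
    have hlastq : last u q = v := by rw [hq, last_append, halast, hl]
    have hcostq : cost W u q ≤ cost W u p := by
      rw [hq, cost_append, halast, hcostp]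
      exact add_le_add_right hcle _
    have hge : cost W u p ≤ cost W u q := by
      rw [hmincost]
      exact dist_le_cost _ _ _ _ hlastq
    have heq : cost W u q = cost W u p := le_antisymm hcostq hge
    have hlenp : p.length ≤ q.length := hminhops q hlastq heq
    have h1 : p.length = tk.length + (2 + dr.length) := by
      rw [hsplit]; simp [List.length_append]; omega
    have h2 : q.length = tk.length + rest'.length := by simp [hq]
    omega
  -- c ≠ a
  have hca : c ≠ a := by
    intro hcaeq
    refine repl dr (by rw [← hcaeq]; exact hlastp) ?_ (by omega)
    calc cost W a dr = cost W c dr := by rw [hcaeq]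
    _ ≤ W a b + (W b c + cost W c dr) := le_add_left (le_add_left le_rfl)
  -- c ∉ S a
  have hnotmem : c ∉ S a := by
    intro hmem
    have hWac : W a c ≤ W a b + W b c := by
      have h1 : W a c ≤ dist w a c := by
        rw [hW]; unfold unionW
        rw [if_pos (Or.inr hmem)]
        exact min_le_right _ _
      refine h1.trans ((dist_triangle w a b c).trans ?_)
      exact add_le_add (dist_le_unionW w S a b) (dist_le_unionW w S b c)
    refine repl (c :: dr) (by rw [last_cons]; exact hlastp) ?_ (by simp; omega)
    show W a c + cost W c dr ≤ _
    calc W a c + cost W c dr ≤ (W a b + W b c) + cost W c dr := add_le_add_left hWac _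
    _ = W a b + (W b c + cost W c dr) := add_assoc _ _ _
  -- finiteness of dist w a c
  have hfinac : dist w a c < ⊤ := by
    have h1 : dist w a c ≤ W a b + W b c :=
      (dist_triangle w a b c).trans
        (add_le_add (dist_le_unionW w S a b) (dist_le_unionW w S b c))
    have h2 : W a b + W b c ≤ cost W u p := by
      rw [hcostp]
      exact le_add_left (add_le_add_right le_self_add _)
    exact lt_of_le_of_lt (h1.trans h2) hfin
  rw [hcgetD]
  exact ⟨fun y hy => (hS a).2.2.1 y hy c hnotmem hca hfinac, hnotmem⟩


end Stmt2
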